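/- Every countable discrete group G admits a proper length function, i.e. a function l : G → [0,∞) such that l(g⁻¹) = l(g) for all g ∈ G, l(gh) ≤ l(g) + l(h) for all g, h ∈ G, l(g) = 0 if and only if g is the identity element, and for every R > 0 the set {g ∈ G : l(g) ≤ R} is finite. -/

import Mathlib

/-- Every countable discrete group admits a proper length function. -/
theorem exists_proper_length_function (G : Type*) [Group G] [Countable G] :
    ∃ l : G → ℝ,
      (∀ g : G, 0 ≤ l g) ∧
      (∀ g : G, l g⁻¹ = l g) ∧
      (∀ g h : G, l (g * h) ≤ l g + l h) ∧
      (∀ g : G, l g = 0 ↔ g = 1) ∧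
      (∀ R : ℝ, 0 < R → {g : G | l g ≤ R}.Finite) := by
  obtain ⟨f, hf⟩ := Countable.exists_injective_nat G
  set w : G → ℕ := fun g => f g + f g⁻¹ + 1 with hw
  have hwsym : ∀ g : G, w g⁻¹ = w g := by
    intro g; simp [hw, inv_inv, Nat.add_comm (f g⁻¹)]
  set S : G → Set ℕ := fun g => {n | ∃ L : List G, L.prod = g ∧ (L.map w).sum = n}
    with hS
  have hne : ∀ g : G, (S g).Nonempty := fun g => ⟨w g, [g], by simp⟩
  set ln : G → ℕ := fun g => sInf (S g) with hln
  have hmem : ∀ g : G, ∃ L : List G, L.prod = g ∧ (L.map w).sum = ln g :=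
    fun g => Nat.sInf_mem (hne g)
  have hle : ∀ L : List G, ln L.prod ≤ (L.map w).sum :=
    fun L => Nat.sInf_le ⟨L, rfl, rfl⟩
  have hsym : ∀ g : G, ln g⁻¹ ≤ ln g := by
    intro g
    obtain ⟨L, hL, hs⟩ := hmem g
    have h1 : ((L.map fun x => x⁻¹).reverse).prod = g⁻¹ := by
      rw [← List.prod_inv_reverse, hL]
    have h2 : (((L.map fun x => x⁻¹).reverse).map w).sum = (L.map w).sum := by
      simp [List.map_reverse, List.sum_reverse, List.map_map, Function.comp_def, hwsym]
    calc ln g⁻¹ ≤ (((L.map fun x => x⁻¹).reverse).map w).sum := h1 ▸ hle _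
      _ = (L.map w).sum := h2
      _ = ln g := hs
  have hsub : ∀ g h : G, ln (g * h) ≤ ln g + ln h := by
    intro g h
    obtain ⟨L1, hL1, hs1⟩ := hmem g
    obtain ⟨L2, hL2, hs2⟩ := hmem h
    have : (L1 ++ L2).prod = g * h := by rw [List.prod_append, hL1, hL2]
    calc ln (g * h) ≤ ((L1 ++ L2).map w).sum := this ▸ hle _
      _ = ln g + ln h := by rw [List.map_append, List.sum_append, hs1, hs2]
  have hzero : ∀ g : G, ln g = 0 ↔ g = 1 := by
    intro g
    constructor
    · intro h
      obtain ⟨L, hL, hs⟩ := hmem g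
      rw [h] at hs
      have : L = [] := by
        cases L with
        | nil => rfl
        | cons x xs => simp [hw] at hs
      rw [this] at hL
      simpa using hL.symm
    · intro h
      subst h
      have := hle []
      simpa using Nat.le_zero.mp (by simpa using this)
  refine ⟨fun g => (ln g : ℝ), fun g => Nat.cast_nonneg _, ?_, ?_, ?_, ?_⟩
  · intro g
    have h1 := hsym g
    have h2 := hsym g⁻¹
    rw [inv_inv] at h2
    show ((ln g⁻¹ : ℕ) : ℝ) = ((ln g : ℕ) : ℝ)
    exact_mod_cast le_antisymm h1 h2
  · intro g h
    show ((ln (g * h) : ℕ) : ℝ) ≤ ((ln g : ℕ) : ℝ) + ((ln h : ℕ) : ℝ)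
    exact_mod_cast hsub g h
  · intro g
    show ((ln g : ℕ) : ℝ) = 0 ↔ g = 1
    rw [Nat.cast_eq_zero]
    exact hzero g
  · intro R hR
    set n : ℕ := ⌈R⌉₊ with hn
    set F : Set G := {x | f x ≤ n} with hF
    have hFfin : F.Finite := Set.Finite.preimage (hf.injOn) (Set.finite_Iic n)
    have : Finite ↥F := hFfin
    set A : Set G := (fun L : List ↥F => (L.map Subtype.val).prod) ''
      {L : List ↥F | L.length ≤ n} with hA
    have hAfin : A.Finite := (List.finite_length_le ↥F n).image _
    apply hAfin.subset
    intro g hg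
    have hgn : ln g ≤ n := by
      have : (ln g : ℝ) ≤ n := le_trans hg (Nat.le_ceil R)
      exact_mod_cast this
    obtain ⟨L, hL, hs⟩ := hmem g
    have hsn : (L.map w).sum ≤ n := hs ▸ hgn
    have hmemF : ∀ x ∈ L, x ∈ F := by
      intro x hx
      have : w x ≤ (L.map w).sum := List.single_le_sum (fun _ _ => Nat.zero_le _) _
        (List.mem_map_of_mem (f := w) hx)
      have hxn : w x ≤ n := le_trans this hsn
      simp only [hw] at hxn
      simp only [hF, Set.mem_setOf_eq]
      omega
    have hlen : L.length ≤ n := by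
      have : L.length ≤ (L.map w).sum := by
        calc L.length = (L.map w).length := (List.length_map _).symm
          _ ≤ (L.map w).sum := List.length_le_sum_of_one_le _ (by
              intro i hi
              obtain ⟨x, _, rfl⟩ := List.mem_map.mp hi
              simp [hw])
      omega
    refine ⟨L.pmap (fun x hx => (⟨x, hx⟩ : ↥F)) hmemF, ?_, ?_⟩
    · simpa [List.length_pmap] using hlen
    · simp only [List.map_pmap]
      rw [show (L.pmap (fun x (hx : x ∈ F) => ((⟨x, hx⟩ : ↥F) : G)) hmemF) = L by
        rw [List.pmap_eq_map]; exact List.map_id L]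
      exact hL
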